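/- Let a and b be positive real numbers with b > a, and let k be a real number with 0 < k ≤ 1. Then A_k(a,b) > a^{1-k} · I(a^k, b^k), where A_k is the power mean of order k and I is the identric mean. -/

import Mathlib

open Real intervalIntegral

lemma key_ineq (x y : ℝ) (hx : 0 < x) (hxy : x < y) :
    y * Real.log y - x * Real.log x - (y - x) < (y - x) * Real.log ((x + y) / 2) := by
  set m := (x + y) / 2 with hm_def
  have hy : 0 < y := hx.trans hxy
  have hm : 0 < m := by simp only [hm_def]; linarith
  have hxm : x < m := by simp only [hm_def]; linarith
  have h1 : (∫ t in x..y, Real.log t) = y * Real.log y - x * Real.log x - y + x := by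
    apply integral_log
  have h2 : (∫ t in x..y, (Real.log m - 1 + t / m)) = (y - x) * Real.log m := by
    rw [intervalIntegral.integral_add intervalIntegrable_const
      ((intervalIntegral.intervalIntegrable_id).div_const m)]
    rw [intervalIntegral.integral_div, integral_id, intervalIntegral.integral_const]
    field_simp
    ring
  have hlt : (∫ t in x..y, Real.log t) < ∫ t in x..y, (Real.log m - 1 + t / m) := by
    apply intervalIntegral.integral_lt_integral_of_continuousOn_of_le_of_exists_lt hxy
    · exact Real.continuousOn_log.mono (fun t ht => by
        simp only [Set.mem_compl_iff, Set.mem_singleton_iff]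
        have := ht.1; intro h; subst h; linarith)
    · fun_prop
    · intro t ht
      have ht0 : 0 < t := lt_trans hx ht.1
      have h := Real.log_le_sub_one_of_pos (x := t / m) (by positivity)
      have hlog : Real.log (t / m) = Real.log t - Real.log m := Real.log_div ht0.ne' hm.ne'
      rw [hlog] at h
      have : t / m - 1 = t / m - 1 := rfl
      nlinarith [h]
    · refine ⟨x, Set.left_mem_Icc.2 hxy.le, ?_⟩
      have h := Real.log_lt_sub_one_of_pos (x := x / m) (by positivity) (by
        intro h
        have : x = m := by field_simp at h; linarith
        linarith)
      have hlog : Real.log (x / m) = Real.log x - Real.log m := Real.log_div hx.ne' hm.ne'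
      rw [hlog] at h
      nlinarith [h]
  rw [h1, h2] at hlt
  linarith

theorem power_mean_gt_identric (a b : ℝ) (ha : 0 < a) (hb : b > a)
    (k : ℝ) (hk : 0 < k) (hk1 : k ≤ 1) :
    ((a ^ k + b ^ k) / 2) ^ (1 / k) >
      a ^ (1 - k) *
        ((1 / Real.exp 1) * ((b ^ k) ^ (b ^ k) / (a ^ k) ^ (a ^ k)) ^ (1 / (b ^ k - a ^ k))) := by
  have hb0 : 0 < b := lt_trans ha hb
  set x := a ^ k with hx_def
  set y := b ^ k with hy_def
  have hx : 0 < x := Real.rpow_pos_of_pos ha k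
  have hy : 0 < y := Real.rpow_pos_of_pos hb0 k
  have hxy : x < y := Real.rpow_lt_rpow ha.le hb hk
  set m := (x + y) / 2 with hm_def
  have hm : 0 < m := by positivity
  have hxm : x < m := by simp only [hm_def]; linarith
  -- Step A: identric mean of x, y is < m
  have hI : (1 / Real.exp 1) * (y ^ y / x ^ x) ^ (1 / (y - x)) < m := by
    have hkey := key_ineq x y hx hxy
    have hyx : 0 < y - x := by linarith
    have hexp : (1 / Real.exp 1) * (y ^ y / x ^ x) ^ (1 / (y - x)) =
        Real.exp ((y * Real.log y - x * Real.log x) / (y - x) - 1) := by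
      have hdiv : (0:ℝ) < y ^ y / x ^ x := by positivity
      have h3 : (y ^ y / x ^ x) ^ (1 / (y - x)) =
          Real.exp ((y * Real.log y - x * Real.log x) / (y - x)) := by
        rw [← Real.exp_log (x := (y ^ y / x ^ x) ^ (1 / (y - x))) (by positivity),
          Real.log_rpow hdiv, Real.log_div (Real.rpow_pos_of_pos hy y).ne' (Real.rpow_pos_of_pos hx x).ne',
          Real.log_rpow hy, Real.log_rpow hx]
        congr 1
        ring
      rw [h3, Real.exp_sub]
      ring
    rw [hexp, ← Real.exp_log hm]
    apply Real.exp_lt_exp.2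
    rw [div_sub_one hyx.ne', div_lt_iff₀ hyx]
    calc y * Real.log y - x * Real.log x - (y - x) < (y - x) * Real.log ((x+y)/2) :=
          hkey
      _ = Real.log m * (y - x) := by rw [← hm_def]; ring
  -- Step B: a^(1-k) * m ≤ m^(1/k)
  have hB : a ^ (1 - k) * m ≤ m ^ (1 / k) := by
    have h1k : 0 ≤ 1 / k - 1 := by
      rw [sub_nonneg, le_div_iff₀ hk, one_mul]; exact hk1
    have ha1k : a ^ (1 - k) = x ^ (1 / k - 1) := by
      rw [hx_def, ← Real.rpow_mul ha.le]
      congr 1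
      field_simp
    rw [ha1k]
    have hmx : x ^ (1 / k - 1) ≤ m ^ (1 / k - 1) :=
      Real.rpow_le_rpow hx.le hxm.le h1k
    calc x ^ (1/k - 1) * m ≤ m ^ (1/k - 1) * m := by
          exact mul_le_mul_of_nonneg_right hmx hm.le
      _ = m ^ (1/k) := by
          rw [← Real.rpow_add_one hm.ne' (1/k - 1)]
          norm_num
  calc a ^ (1 - k) * ((1 / Real.exp 1) * (y ^ y / x ^ x) ^ (1 / (y - x)))
      < a ^ (1 - k) * m := by
        apply mul_lt_mul_of_pos_left hI (Real.rpow_pos_of_pos ha _)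
    _ ≤ m ^ (1 / k) := hB
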